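/- There exists a universal constant C > 0 such that the following holds for all d, m ∈ ℕ with m ≥ 2, all 0 < ε₁ ≤ 0.5, 0 < δ₁ ≤ 0.5, 0 < ε_d < 0.1, every dataset S = {(x_1,y_1),…,(x_m,y_m)} ⊆ ℝ^d × {−1,1} satisfying Assumption(ψ, φ) with ψ ≤ 0.1 and φ ≤ ε_d/(4m), and every (ε₁, δ₁)-approximate KKT point w of the margin-maximization problem w.r.t. S with multipliers λ_1,…,λ_m: for every l ∈ [m], every 0 < ε̃ ≤ 0.5, 0 < δ̃ ≤ 0.5, and every w̃ ∈ ℝ^d that is an (ε̃, δ̃)-approximate KKT point of the margin-maximization problem w.r.t. S \ {(x_l, y_l)}, one has ⟨w, w̃⟩ ≤ (1 − C/m + C(ε_d + ε₁ + ε̃))·‖w‖·‖w̃‖. (In particular, keeping the original predictor unchanged is not a successful unlearning algorithm.) -/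

import Mathlib

open Finset

private lemma aux_le_of_sq (a b : ℝ) (ha : 0 ≤ a) (hb : 0 ≤ b) (h : a^2 ≤ b^2) : a ≤ b := by
  by_contra hc
  push_neg at hc
  nlinarith [mul_pos (show (0:ℝ) < a - b by linarith) (show (0:ℝ) < a + b by linarith)]

private lemma aux_sq_mono (a b : ℝ) (ha : 0 ≤ a) (h : a ≤ b) : a^2 ≤ b^2 := by nlinarith

private lemma aux_quad_max (a M : ℝ) (ha : 0 ≤ a) (h1 : 0.875*a - 0.5245 ≤ M)
    (h2 : a*(M-1) ≤ 0.5) : a ≤ 2.03 := by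
  by_contra hcon
  push_neg at hcon
  nlinarith [mul_le_mul_of_nonneg_left h1 ha,
    mul_pos (show (0:ℝ) < a - 2.03 by linarith) (show (0:ℝ) < a by linarith)]

private lemma aux_quad_margin (a M ε₁ : ℝ) (ha : 0 ≤ a) (hM : 1 ≤ M) (hε : 0 ≤ ε₁)
    (hup : M ≤ 1.1*a + 0.051 + 1.049*ε₁) (hc : a*(M-1) ≤ 0.5) : M ≤ 1.43 + 1.16*ε₁ := by
  by_contra hcon
  push_neg at hcon
  nlinarith [mul_le_mul_of_nonneg_right
      (show M - 0.051 - 1.049*ε₁ ≤ 1.1*a from by linarith)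
      (show (0:ℝ) ≤ M - 1 from by linarith),
    mul_nonneg (show (0:ℝ) ≤ M - 1.43 - 1.16*ε₁ from by linarith) hε,
    sq_nonneg (M - 1.43 - 1.16*ε₁), sq_nonneg ε₁]

private lemma aux_rhomu (ε₁ ε' : ℝ) (h1 : 0 ≤ ε₁) (h2 : 0 ≤ ε') (hσ : ε₁ + ε' ≤ 1/2) :
    (0.051 + 1.049*ε') * (1.43 + 1.16*ε₁) ≤ 0.83 := by
  nlinarith [mul_nonneg h1 (show (0:ℝ) ≤ 1/2 - ε₁ - ε' by linarith), sq_nonneg ε₁]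

private lemma aux_sq_prod (a n : ℝ) (ha : 0 ≤ a) (ha2 : a ≤ 2.03) (hn0 : 0 ≤ n)
    (hn : n ≤ 1.1) : a^2*n ≤ 2.03^2 * 1.1 := by nlinarith

private lemma aux_wub (s mm : ℝ) (hs : 0 ≤ s) (hm : 2 ≤ mm) (h : s^2 ≤ 4.64*mm) :
    (s+1/2)^2 ≤ 8*mm := by nlinarith [sq_nonneg (s-3)]

private lemma aux_pos1 (a b : ℝ) (h : 1 ≤ a*b) (hb : b ≤ 1.049) (ha : 0 ≤ a) (hb0 : 0 ≤ b) :
    0.95 ≤ a := by nlinarith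

private lemma aux_pos2 (a b c : ℝ) (h : c ≤ a*b) (hc : 1 ≤ c) (ha : 0 ≤ a) (hb : 0 ≤ b) :
    0 < a := by
  rcases lt_or_ge 0 a with h' | h'
  · exact h'
  · have ha0 : a = 0 := le_antisymm h' ha
    rw [ha0] at h
    simp at h
    linarith

private lemma aux_usq (mm t : ℝ) (hm : 2 ≤ mm) (h : t ≤ 1.125*(mm-1)) :
    t ≤ (1.0607*(mm-1))^2 := by nlinarith [sq_nonneg (mm-2)]


private lemma aux_wnub (U A za zu Z mm : ℝ) (hU0 : 0 ≤ U) (hA0 : 0 ≤ A)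
    (hU2 : U ≤ 2.01*(mm-1)) (hA2 : A ≤ 2.01) (h1 : za ≤ Z*1.049)
    (h2 : -zu ≤ Z*(1.0607*(mm-1))) (hZ : 0 ≤ Z) (hm : 2 ≤ mm) :
    U*za - A*zu ≤ Z*(4.241*(mm-1)) := by
  have hm1 : (0:ℝ) ≤ mm - 1 := by linarith
  have t1 := mul_le_mul_of_nonneg_left h1 hU0
  have t2 := mul_le_mul_of_nonneg_left h2 hA0
  have t3 : U*(Z*1.049) ≤ (2.01*(mm-1))*(Z*1.049) :=
    mul_le_mul_of_nonneg_right hU2 (by positivity)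
  have t4 : A*(Z*(1.0607*(mm-1))) ≤ 2.01*(Z*(1.0607*(mm-1))) := by
    refine mul_le_mul_of_nonneg_right hA2 ?_
    positivity
  nlinarith [t1, t2, t3, t4, mul_nonneg hZ hm1]

private lemma aux_zlb (W N Z mm : ℝ) (hN : 0.17*(mm-1) ≤ N) (hWN : W*N ≤ Z*(4.241*(mm-1)))
    (hW : 0 < W) (hm : 2 ≤ mm) (hZ : 0 ≤ Z) : 0.04*W ≤ Z := by
  by_contra hcon
  push_neg at hcon
  have h1 := mul_le_mul_of_nonneg_left hN hW.le
  have h2 : Z*(4.241*(mm-1)) < 0.04*W*(4.241*(mm-1)) :=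
    mul_lt_mul_of_pos_right hcon (by linarith)
  nlinarith [h1, h2, hWN, mul_pos hW (show (0:ℝ) < mm-1 by linarith)]

private lemma aux_det (A A' U U' mm ε₁ ε' : ℝ) (hm : 2 ≤ mm) (hA1 : 1 ≤ A)
    (hU' : mm - 1 ≤ U') (hU : mm - 1 ≤ U) (hUub : U ≤ (mm-1)*(1.43+1.16*ε₁))
    (hρ : A' ≤ 0.051 + 1.049*ε') (hε₁ : 0 ≤ ε₁) (hε' : 0 ≤ ε') (hσ : ε₁ + ε' ≤ 1/2) :
    0.17*(mm-1) ≤ A*U' - A'*U := by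
  have hAU' : mm-1 ≤ A*U' := by
    calc mm-1 = 1*(mm-1) := by ring
      _ ≤ A*U' := mul_le_mul hA1 hU' (by linarith) (by linarith)
  have hU0 : (0:ℝ) ≤ U := by linarith
  have hρ0 : (0:ℝ) ≤ 0.051 + 1.049*ε' := by linarith
  have hp1 := mul_nonneg hρ0 (show (0:ℝ) ≤ (mm-1)*(1.43+1.16*ε₁) - U by linarith)
  have hp2 := mul_nonneg hU0 (show (0:ℝ) ≤ (0.051+1.049*ε') - A' by linarith)
  have hρμ := aux_rhomu ε₁ ε' hε₁ hε' hσ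
  have hscale := mul_le_mul_of_nonneg_left hρμ (show (0:ℝ) ≤ mm-1 by linarith)
  nlinarith [hAU', hp1, hp2, hscale]

private lemma aux_final (W W' ip s E zsq : ℝ) (hzeq : zsq = 2*W*W'*(W*W' - ip))
    (hzlb : 0.0016*W^2 ≤ zsq) (h8 : s*W'^2 ≤ 8) (hs : 0 ≤ s) (hE : 0 ≤ E)
    (hW : 0 < W) (hW' : 0 < W') : ip ≤ (1 - 1/20000*s + 1/20000*E)*(W*W') := by
  have hsw : W^2*(s*W'^2) ≤ W^2*8 := mul_le_mul_of_nonneg_left h8 (sq_nonneg _)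
  have hE2 : 0 ≤ 2*(1/20000)*E*(W*W')^2 := by positivity
  by_contra hcon
  push_neg at hcon
  have hbig : 0 < 2*(W*W') := by positivity
  have hneg : (1 - 1/20000*s + 1/20000*E)*(W*W') - ip < 0 := by linarith
  nlinarith [mul_neg_of_pos_of_neg hbig hneg, hzeq, hzlb, hsw, hE2, sq_nonneg W]

set_option maxHeartbeats 4000000 in
/-- The identity map is not a successful unlearning algorithm for linear
predictors: there is a universal constant `C > 0` such that the original predictor `w` has
cosine similarity at most `1 - C/m + C(εd + ε₁ + ε̃)` with any approximate KKT point of the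
margin-maximization problem w.r.t. the retained dataset `S \ {(x_l, y_l)}`. -/
theorem stmt_8 :
    ∃ C : ℝ, 0 < C ∧
      ∀ (d m : ℕ), 2 ≤ m →
      ∀ (ε₁ δ₁ εd ψ φ : ℝ),
        0 < ε₁ → ε₁ ≤ 0.5 → 0 < δ₁ → δ₁ ≤ 0.5 → 0 < εd → εd < 0.1 →
        ψ ≤ 0.1 → φ ≤ εd / (4 * m) →
      ∀ (x : Fin m → EuclideanSpace ℝ (Fin d)) (y : Fin m → ℝ),
        (∀ i, y i = 1 ∨ y i = -1) →
        (∀ i, 1 - ψ ≤ ‖x i‖ ^ 2 ∧ ‖x i‖ ^ 2 ≤ 1 + ψ) →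
        (∀ i j, i ≠ j → |(inner ℝ (x i) (x j) : ℝ)| ≤ φ) →
      ∀ (w : EuclideanSpace ℝ (Fin d)) (lam : Fin m → ℝ),
        (∀ i, 0 ≤ lam i) →
        ‖w - ∑ i, (lam i * y i) • x i‖ ≤ ε₁ →
        (∀ i, lam i * (y i * (inner ℝ w (x i) : ℝ) - 1) ≤ δ₁) →
        (∀ i, 1 ≤ y i * (inner ℝ w (x i) : ℝ)) →
      ∀ l : Fin m,
      ∀ (ε' δ' : ℝ), 0 < ε' → ε' ≤ 0.5 → 0 < δ' → δ' ≤ 0.5 →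
      ∀ (w' : EuclideanSpace ℝ (Fin d)) (lam' : Fin m → ℝ),
        (∀ i, i ≠ l → 0 ≤ lam' i) →
        ‖w' - ∑ i ∈ Finset.univ.erase l, (lam' i * y i) • x i‖ ≤ ε' →
        (∀ i, i ≠ l → lam' i * (y i * (inner ℝ w' (x i) : ℝ) - 1) ≤ δ') →
        (∀ i, i ≠ l → 1 ≤ y i * (inner ℝ w' (x i) : ℝ)) →
        (inner ℝ w w' : ℝ) ≤
          (1 - C / m + C * (εd + ε₁ + ε')) * (‖w‖ * ‖w'‖) := by
  refine ⟨1/20000, by norm_num, ?_⟩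
  intro d m hm ε₁ δ₁ εd ψ φ hε₁ hε₁' hδ₁ hδ₁' hεd hεd' hψ hφ x y hy hx hxx w lam hlam hw
    hcomp hmarg l ε' δ' hε'p hε'le hδ'p hδ'le w' lam' hlam' hw' hcomp' hmarg'
  have hm2 : (2:ℝ) ≤ (m:ℝ) := by exact_mod_cast hm
  have hm0 : (0:ℝ) < (m:ℝ) := by linarith
  have hWW0 : (0:ℝ) ≤ ‖w‖ * ‖w'‖ := mul_nonneg (norm_nonneg _) (norm_nonneg _)
  have hcs : (inner ℝ w w' : ℝ) ≤ ‖w‖ * ‖w'‖ := real_inner_le_norm w w'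
  rw [show (1:ℝ)/20000/(m:ℝ) = 1/20000*(1/(m:ℝ)) from by ring]
  -- trivial case: total error at least 1/m
  rcases le_or_gt (1/(m:ℝ)) (εd + ε₁ + ε') with htriv | hEsmall
  · have h1 : (0:ℝ) ≤ (εd + ε₁ + ε' - 1/(m:ℝ)) * (‖w‖ * ‖w'‖) :=
      mul_nonneg (by linarith) hWW0
    linarith [h1, hcs]
  -- main case
  have h1m : 1/(m:ℝ) ≤ 1/2 := by
    apply div_le_div_of_nonneg_left <;> linarith
  have hσ : ε₁ + ε' ≤ 1/2 := by linarith
  -- basic facts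
  have hy1 : ∀ i, y i * y i = 1 := by
    intro i; rcases hy i with h | h <;> rw [h] <;> norm_num
  have hyabs : ∀ i, |y i| = 1 := by
    intro i; rcases hy i with h | h <;> rw [h] <;> norm_num
  have hxu : ∀ i, ‖x i‖ ≤ 1.049 := by
    intro i
    refine aux_le_of_sq _ _ (norm_nonneg _) (by norm_num) ?_
    have := (hx i).2
    nlinarith [this]
  have hxsq : ∀ i, (0.9:ℝ) ≤ ‖x i‖^2 ∧ ‖x i‖^2 ≤ 1.1 := by
    intro i
    refine ⟨?_, ?_⟩
    · have := (hx i).1; linarith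
    · have := (hx i).2; linarith
  have hφ0 : (0:ℝ) ≤ φ := by
    have h01 : (⟨0, by omega⟩ : Fin m) ≠ ⟨1, by omega⟩ := by simp [Fin.ext_iff]
    exact le_trans (abs_nonneg _) (hxx _ _ h01)
  have hmφ : (m:ℝ) * φ ≤ εd / 4 := by
    have h := mul_le_mul_of_nonneg_left hφ (le_of_lt hm0)
    calc (m:ℝ)*φ ≤ (m:ℝ) * (εd/(4*(m:ℝ))) := h
      _ = εd/4 := by field_simp
  have hmφ' : (m:ℝ) * φ ≤ 0.025 := by linarith
  have hmφ0 : (0:ℝ) ≤ (m:ℝ) * φ := mul_nonneg hm0.le hφ0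
  -- notation
  set v : EuclideanSpace ℝ (Fin d) := ∑ i, (lam i * y i) • x i with hv
  set v' : EuclideanSpace ℝ (Fin d) := ∑ i ∈ Finset.univ.erase l, (lam' i * y i) • x i with hv'
  set u : EuclideanSpace ℝ (Fin d) := ∑ i ∈ Finset.univ.erase l, (y i) • x i with hu
  clear_value v v' u
  have hcardE : ((Finset.univ.erase l).card : ℝ) = (m:ℝ) - 1 := by
    rw [Finset.card_erase_of_mem (Finset.mem_univ l)]
    rw [Finset.card_univ, Fintype.card_fin]
    have h1 : 1 ≤ m := by omega
    push_cast [Nat.cast_sub h1]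
    ring
  -- generic expansion
  have expand : ∀ (s : Finset (Fin m)) (c : Fin m → ℝ) (t : EuclideanSpace ℝ (Fin d)),
      (inner ℝ (∑ j ∈ s, (c j) • x j) t : ℝ) = ∑ j ∈ s, c j * (inner ℝ (x j) t : ℝ) := by
    intro s c t
    rw [sum_inner]
    exact Finset.sum_congr rfl fun j _ => real_inner_smul_left _ _ _
  -- generic tail bound
  have tail : ∀ (s : Finset (Fin m)) (c : Fin m → ℝ) (B : ℝ), 0 ≤ B →
      (∀ j ∈ s, |c j| ≤ B) → ∀ (t : Fin m), t ∉ s →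
      |∑ j ∈ s, c j * (inner ℝ (x j) (x t) : ℝ)| ≤ B * ((m:ℝ) * φ) := by
    intro s c B hB hc t ht
    calc |∑ j ∈ s, c j * (inner ℝ (x j) (x t):ℝ)|
        ≤ ∑ j ∈ s, |c j * (inner ℝ (x j) (x t):ℝ)| := Finset.abs_sum_le_sum_abs _ _
      _ ≤ ∑ _j ∈ s, B * φ := by
          refine Finset.sum_le_sum fun j hj => ?_
          rw [abs_mul]
          have h1 : |(inner ℝ (x j) (x t):ℝ)| ≤ φ := hxx j t (fun h => ht (h ▸ hj))
          exact mul_le_mul (hc j hj) h1 (abs_nonneg _) hB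
      _ = (s.card : ℝ) * (B * φ) := by rw [Finset.sum_const, nsmul_eq_mul]
      _ ≤ (m:ℝ) * (B * φ) := by
          have hcard : ((s.card : ℕ) : ℝ) ≤ (m:ℝ) := by
            have h := Finset.card_le_univ s
            simp only [Finset.card_univ, Fintype.card_fin] at h
            exact_mod_cast h
          exact mul_le_mul_of_nonneg_right hcard (mul_nonneg hB hφ0)
      _ = B * ((m:ℝ)*φ) := by ring
  -- margin estimates for w
  have west : ∀ (i : Fin m) (B : ℝ), 0 ≤ B → (∀ j, lam j ≤ B) →
      |y i * (inner ℝ w (x i) : ℝ) - lam i * ‖x i‖^2| ≤ B * ((m:ℝ)*φ) + 1.049 * ε₁ := by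
    intro i B hB hlb
    have hself : (inner ℝ (x i) (x i) : ℝ) = ‖x i‖^2 := real_inner_self_eq_norm_sq (x i)
    have hsplit : (inner ℝ v (x i) : ℝ) =
        (∑ j ∈ Finset.univ.erase i, (lam j * y j) * (inner ℝ (x j) (x i):ℝ))
        + (lam i * y i) * ‖x i‖^2 := by
      rw [hv, expand Finset.univ (fun j => lam j * y j) (x i)]
      rw [← Finset.sum_erase_add Finset.univ _ (Finset.mem_univ i), hself]
    have htail := tail (Finset.univ.erase i) (fun j => lam j * y j) B hB
      (fun j _ => by
        rw [abs_mul, hyabs j, mul_one, abs_of_nonneg (hlam j)]; exact hlb j)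
      i (Finset.notMem_erase i _)
    have hwv : |(inner ℝ (w - v) (x i) : ℝ)| ≤ ε₁ * 1.049 := by
      calc |(inner ℝ (w-v) (x i):ℝ)| ≤ ‖w - v‖ * ‖x i‖ := abs_real_inner_le_norm _ _
        _ ≤ ε₁ * 1.049 := mul_le_mul hw (hxu i) (norm_nonneg _) hε₁.le
    have hsub : (inner ℝ (w - v) (x i) : ℝ) = inner ℝ w (x i) - inner ℝ v (x i) :=
      inner_sub_left _ _ _
    have key : y i * (inner ℝ w (x i):ℝ) - lam i * ‖x i‖^2
        = y i * (inner ℝ (w - v) (x i):ℝ)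
          + y i * (∑ j ∈ Finset.univ.erase i, (lam j * y j) * (inner ℝ (x j) (x i):ℝ)) := by
      rw [hsub, hsplit]
      linear_combination (lam i * ‖x i‖ ^ 2) * hy1 i
    rw [key]
    have h5 : |y i * (inner ℝ (w - v) (x i):ℝ)
          + y i * (∑ j ∈ Finset.univ.erase i, (lam j * y j) * (inner ℝ (x j) (x i):ℝ))|
        ≤ |(inner ℝ (w - v) (x i):ℝ)|
          + |∑ j ∈ Finset.univ.erase i, (lam j * y j) * (inner ℝ (x j) (x i):ℝ)| := by
      calc _ ≤ |y i * (inner ℝ (w - v) (x i):ℝ)|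
          + |y i * (∑ j ∈ Finset.univ.erase i, (lam j * y j) * (inner ℝ (x j) (x i):ℝ))| :=
            abs_add_le _ _
        _ = _ := by rw [abs_mul, abs_mul, hyabs i, one_mul, one_mul]
    linarith [htail, hwv, h5]
  -- margin estimates for w'
  have west' : ∀ (i : Fin m), i ≠ l → ∀ (B : ℝ), 0 ≤ B →
      (∀ j ∈ Finset.univ.erase l, lam' j ≤ B) →
      |y i * (inner ℝ w' (x i) : ℝ) - lam' i * ‖x i‖^2| ≤ B * ((m:ℝ)*φ) + 1.049 * ε' := by
    intro i hil B hB hlb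
    have hiE : i ∈ Finset.univ.erase l := Finset.mem_erase.mpr ⟨hil, Finset.mem_univ i⟩
    have hself : (inner ℝ (x i) (x i) : ℝ) = ‖x i‖^2 := real_inner_self_eq_norm_sq (x i)
    have hsplit : (inner ℝ v' (x i) : ℝ) =
        (∑ j ∈ (Finset.univ.erase l).erase i, (lam' j * y j) * (inner ℝ (x j) (x i):ℝ))
        + (lam' i * y i) * ‖x i‖^2 := by
      rw [hv', expand (Finset.univ.erase l) (fun j => lam' j * y j) (x i)]
      rw [← Finset.sum_erase_add (Finset.univ.erase l) _ hiE, hself]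
    have htail := tail ((Finset.univ.erase l).erase i) (fun j => lam' j * y j) B hB
      (fun j hj => by
        have hjE : j ∈ Finset.univ.erase l := Finset.mem_of_mem_erase hj
        have hjl : j ≠ l := (Finset.mem_erase.mp hjE).1
        rw [abs_mul, hyabs j, mul_one, abs_of_nonneg (hlam' j hjl)]; exact hlb j hjE)
      i (Finset.notMem_erase i _)
    have hwv : |(inner ℝ (w' - v') (x i) : ℝ)| ≤ ε' * 1.049 := by
      calc |(inner ℝ (w'-v') (x i):ℝ)| ≤ ‖w' - v'‖ * ‖x i‖ := abs_real_inner_le_norm _ _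
        _ ≤ ε' * 1.049 := mul_le_mul hw' (hxu i) (norm_nonneg _) hε'p.le
    have hsub : (inner ℝ (w' - v') (x i) : ℝ) = inner ℝ w' (x i) - inner ℝ v' (x i) :=
      inner_sub_left _ _ _
    have key : y i * (inner ℝ w' (x i):ℝ) - lam' i * ‖x i‖^2
        = y i * (inner ℝ (w' - v') (x i):ℝ)
          + y i * (∑ j ∈ (Finset.univ.erase l).erase i,
              (lam' j * y j) * (inner ℝ (x j) (x i):ℝ)) := by
      rw [hsub, hsplit]
      linear_combination (lam' i * ‖x i‖ ^ 2) * hy1 i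
    rw [key]
    have h5 : |y i * (inner ℝ (w' - v') (x i):ℝ)
          + y i * (∑ j ∈ (Finset.univ.erase l).erase i,
              (lam' j * y j) * (inner ℝ (x j) (x i):ℝ))|
        ≤ |(inner ℝ (w' - v') (x i):ℝ)|
          + |∑ j ∈ (Finset.univ.erase l).erase i,
              (lam' j * y j) * (inner ℝ (x j) (x i):ℝ)| := by
      calc _ ≤ |y i * (inner ℝ (w' - v') (x i):ℝ)|
          + |y i * (∑ j ∈ (Finset.univ.erase l).erase i,
              (lam' j * y j) * (inner ℝ (x j) (x i):ℝ))| := abs_add_le _ _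
        _ = _ := by rw [abs_mul, abs_mul, hyabs i, one_mul, one_mul]
    linarith [htail, hwv, h5]
  -- bound on multipliers for w : lam i ≤ 2.03
  have hΛ : ∀ j, lam j ≤ 2.03 := by
    obtain ⟨k, -, hk⟩ := Finset.exists_max_image (Finset.univ : Finset (Fin m)) lam
      ⟨l, Finset.mem_univ l⟩
    have hkmax : ∀ j, lam j ≤ lam k := fun j => hk j (Finset.mem_univ j)
    have hk203 : lam k ≤ 2.03 := by
      have hest := west k (lam k) (hlam k) hkmax
      have hMk : lam k * ‖x k‖^2 - (lam k * ((m:ℝ)*φ) + 1.049 * ε₁)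
          ≤ y k * (inner ℝ w (x k):ℝ) := by
        have := (abs_le.mp hest).1; linarith
      have hq := mul_le_mul_of_nonneg_left hmφ' (hlam k)
      have hn' := mul_le_mul_of_nonneg_left (hxsq k).1 (hlam k)
      have hM2 : 0.875 * lam k - 0.5245 ≤ y k * (inner ℝ w (x k):ℝ) := by
        linarith [hMk, hq, hn', hε₁']
      exact aux_quad_max (lam k) _ (hlam k) hM2 (by linarith [hcomp k, hδ₁'])
    exact fun j => (hkmax j).trans hk203
  -- bound on multipliers for w' : lam' j ≤ 2.03 on the erased set
  have hEne : (Finset.univ.erase l).Nonempty := by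
    rw [← Finset.card_pos]
    have : (Finset.univ.erase l).card = m - 1 := by
      rw [Finset.card_erase_of_mem (Finset.mem_univ l), Finset.card_univ, Fintype.card_fin]
    omega
  have hΛ' : ∀ j ∈ Finset.univ.erase l, lam' j ≤ 2.03 := by
    obtain ⟨k, hkmem, hk⟩ := Finset.exists_max_image (Finset.univ.erase l) lam' hEne
    have hkl : k ≠ l := (Finset.mem_erase.mp hkmem).1
    have hk203 : lam' k ≤ 2.03 := by
      have hest := west' k hkl (lam' k) (hlam' k hkl) (fun j hj => hk j hj)
      have hMk : lam' k * ‖x k‖^2 - (lam' k * ((m:ℝ)*φ) + 1.049 * ε')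
          ≤ y k * (inner ℝ w' (x k):ℝ) := by
        have := (abs_le.mp hest).1; linarith
      have hq := mul_le_mul_of_nonneg_left hmφ' (hlam' k hkl)
      have hn' := mul_le_mul_of_nonneg_left (hxsq k).1 (hlam' k hkl)
      have hM2 : 0.875 * lam' k - 0.5245 ≤ y k * (inner ℝ w' (x k):ℝ) := by
        linarith [hMk, hq, hn', hε'le]
      exact aux_quad_max (lam' k) _ (hlam' k hkl) hM2 (by linarith [hcomp' k hkl, hδ'le])
    exact fun j hj => (hk j hj).trans hk203
  -- margin upper bound for w : y i ⟪w, x i⟫ ≤ 1.43 + 1.16 ε₁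
  have hμ : ∀ i, y i * (inner ℝ w (x i):ℝ) ≤ 1.43 + 1.16*ε₁ := by
    intro i
    have hest := west i 2.03 (by norm_num) hΛ
    have hupr : y i * (inner ℝ w (x i):ℝ) ≤ lam i * ‖x i‖^2 + (2.03 * ((m:ℝ)*φ) + 1.049 * ε₁) := by
      have := (abs_le.mp hest).2; linarith
    have hn' := mul_le_mul_of_nonneg_left (hxsq i).2 (hlam i)
    have hup2 : y i * (inner ℝ w (x i):ℝ) ≤ 1.1 * lam i + 0.051 + 1.049*ε₁ := by
      linarith [hmφ']
    exact aux_quad_margin (lam i) _ ε₁ (hlam i) (hmarg i) hε₁.le hup2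
      (by linarith [hcomp i, hδ₁'])
  -- bound on the correlation of w' with the erased point
  have hρ : y l * (inner ℝ w' (x l):ℝ) ≤ 0.051 + 1.049 * ε' := by
    have htail := tail (Finset.univ.erase l) (fun j => lam' j * y j) 2.03 (by norm_num)
      (fun j hj => by
        have hjl : j ≠ l := (Finset.mem_erase.mp hj).1
        rw [abs_mul, hyabs j, mul_one, abs_of_nonneg (hlam' j hjl)]; exact hΛ' j hj)
      l (Finset.notMem_erase l _)
    have hv'xl : (inner ℝ v' (x l):ℝ)
        = ∑ j ∈ Finset.univ.erase l, (lam' j * y j) * (inner ℝ (x j) (x l):ℝ) := by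
      rw [hv', expand]
    have hwv' : |(inner ℝ (w' - v') (x l):ℝ)| ≤ ε' * 1.049 := by
      calc |(inner ℝ (w'-v') (x l):ℝ)| ≤ ‖w' - v'‖ * ‖x l‖ := abs_real_inner_le_norm _ _
        _ ≤ ε' * 1.049 := mul_le_mul hw' (hxu l) (norm_nonneg _) hε'p.le
    have hsub : (inner ℝ (w' - v') (x l) : ℝ) = inner ℝ w' (x l) - inner ℝ v' (x l) :=
      inner_sub_left _ _ _
    have h1 : y l * (inner ℝ w' (x l):ℝ)
        = y l * (inner ℝ (w' - v') (x l):ℝ) + y l * (inner ℝ v' (x l):ℝ) := by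
      rw [hsub]; ring
    have h2 : y l * (inner ℝ (w' - v') (x l):ℝ) ≤ ε' * 1.049 := by
      calc y l * (inner ℝ (w' - v') (x l):ℝ) ≤ |y l * (inner ℝ (w' - v') (x l):ℝ)| := le_abs_self _
        _ = |(inner ℝ (w' - v') (x l):ℝ)| := by rw [abs_mul, hyabs l, one_mul]
        _ ≤ ε' * 1.049 := hwv'
    have h3 : y l * (inner ℝ v' (x l):ℝ) ≤ 2.03 * ((m:ℝ)*φ) := by
      calc y l * (inner ℝ v' (x l):ℝ) ≤ |y l * (inner ℝ v' (x l):ℝ)| := le_abs_self _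
        _ = |(inner ℝ v' (x l):ℝ)| := by rw [abs_mul, hyabs l, one_mul]
        _ ≤ 2.03 * ((m:ℝ)*φ) := by rw [hv'xl]; exact htail
    linarith [hmφ']
  -- inner ℝ products with u
  have hwu_eq : ∀ (g : EuclideanSpace ℝ (Fin d)),
      (inner ℝ g u : ℝ) = ∑ j ∈ Finset.univ.erase l, y j * (inner ℝ g (x j):ℝ) := by
    intro g
    rw [hu, inner_sum]
    exact Finset.sum_congr rfl fun j _ => real_inner_smul_right _ _ _
  have hUlb : (m:ℝ) - 1 ≤ (inner ℝ w u : ℝ) := by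
    rw [hwu_eq w]
    calc (m:ℝ) - 1 = ∑ _j ∈ Finset.univ.erase l, (1:ℝ) := by
          rw [Finset.sum_const, nsmul_eq_mul, mul_one, hcardE]
      _ ≤ _ := Finset.sum_le_sum fun j _ => hmarg j
  have hUub : (inner ℝ w u : ℝ) ≤ ((m:ℝ) - 1) * (1.43 + 1.16*ε₁) := by
    rw [hwu_eq w]
    calc (∑ j ∈ Finset.univ.erase l, y j * (inner ℝ w (x j):ℝ))
        ≤ ∑ _j ∈ Finset.univ.erase l, (1.43 + 1.16*ε₁) :=
          Finset.sum_le_sum fun j _ => hμ j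
      _ = ((m:ℝ) - 1) * (1.43 + 1.16*ε₁) := by
          rw [Finset.sum_const, nsmul_eq_mul, hcardE]
  have hU'lb : (m:ℝ) - 1 ≤ (inner ℝ w' u : ℝ) := by
    rw [hwu_eq w']
    calc (m:ℝ) - 1 = ∑ _j ∈ Finset.univ.erase l, (1:ℝ) := by
          rw [Finset.sum_const, nsmul_eq_mul, mul_one, hcardE]
      _ ≤ _ := Finset.sum_le_sum fun j hj => hmarg' j (Finset.mem_erase.mp hj).1
  -- norm bound for u
  have hu_sq : ‖u‖^2 ≤ 1.125 * ((m:ℝ) - 1) := by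
    have h0 : ‖u‖^2 = (inner ℝ u u : ℝ) := (real_inner_self_eq_norm_sq u).symm
    rw [h0, hwu_eq u]
    have hterm : ∀ j ∈ Finset.univ.erase l, y j * (inner ℝ u (x j):ℝ) ≤ 1.125 := by
      intro j hj
      have hself : (inner ℝ (x j) (x j) : ℝ) = ‖x j‖^2 := real_inner_self_eq_norm_sq (x j)
      have hsplit : (inner ℝ u (x j) : ℝ) =
          (∑ i ∈ (Finset.univ.erase l).erase j, (y i) * (inner ℝ (x i) (x j):ℝ))
          + (y j) * ‖x j‖^2 := by
        rw [hu, expand (Finset.univ.erase l) y (x j)]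
        rw [← Finset.sum_erase_add (Finset.univ.erase l) _ hj, hself]
      have htail := tail ((Finset.univ.erase l).erase j) y 1 (by norm_num)
        (fun i _ => le_of_eq (hyabs i)) j (Finset.notMem_erase j _)
      have h2 : y j * (inner ℝ u (x j):ℝ)
          = y j * (∑ i ∈ (Finset.univ.erase l).erase j, (y i) * (inner ℝ (x i) (x j):ℝ))
            + ‖x j‖^2 := by
        rw [hsplit]
        linear_combination (‖x j‖ ^ 2) * hy1 j
      rw [h2]
      have h3 : y j * (∑ i ∈ (Finset.univ.erase l).erase j, (y i) * (inner ℝ (x i) (x j):ℝ))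
          ≤ 1 * ((m:ℝ)*φ) := by
        calc _ ≤ |y j * (∑ i ∈ (Finset.univ.erase l).erase j,
              (y i) * (inner ℝ (x i) (x j):ℝ))| := le_abs_self _
          _ = |∑ i ∈ (Finset.univ.erase l).erase j, (y i) * (inner ℝ (x i) (x j):ℝ)| := by
              rw [abs_mul, hyabs j, one_mul]
          _ ≤ 1 * ((m:ℝ)*φ) := htail
      have h4 := (hxsq j).2
      linarith [hmφ']
    calc (∑ j ∈ Finset.univ.erase l, y j * (inner ℝ u (x j):ℝ))
        ≤ ∑ _j ∈ Finset.univ.erase l, (1.125:ℝ) := Finset.sum_le_sum hterm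
      _ = 1.125 * ((m:ℝ) - 1) := by rw [Finset.sum_const, nsmul_eq_mul, hcardE]; ring
  -- norm bound for v'
  have hv'_sq : ‖v'‖^2 ≤ 4.64 * (m:ℝ) := by
    have h0 : ‖v'‖^2 = (inner ℝ v' v' : ℝ) := (real_inner_self_eq_norm_sq v').symm
    have hexp : (inner ℝ v' v' : ℝ)
        = ∑ j ∈ Finset.univ.erase l, (lam' j * y j) * (inner ℝ v' (x j):ℝ) := by
      conv_lhs => rw [hv']
      rw [expand (Finset.univ.erase l) (fun i => lam' i * y i) _]
      refine Finset.sum_congr rfl fun j _ => ?_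
      rw [← hv', real_inner_comm]
    rw [h0, hexp]
    have hterm : ∀ j ∈ Finset.univ.erase l,
        (lam' j * y j) * (inner ℝ v' (x j):ℝ) ≤ 4.64 := by
      intro j hj
      have hjl : j ≠ l := (Finset.mem_erase.mp hj).1
      have hself : (inner ℝ (x j) (x j) : ℝ) = ‖x j‖^2 := real_inner_self_eq_norm_sq (x j)
      have hsplit : (inner ℝ v' (x j) : ℝ) =
          (∑ i ∈ (Finset.univ.erase l).erase j, (lam' i * y i) * (inner ℝ (x i) (x j):ℝ))
          + (lam' j * y j) * ‖x j‖^2 := by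
        rw [hv', expand (Finset.univ.erase l) (fun i => lam' i * y i) (x j)]
        rw [← Finset.sum_erase_add (Finset.univ.erase l) _ hj, hself]
      have htail := tail ((Finset.univ.erase l).erase j) (fun i => lam' i * y i) 2.03
        (by norm_num)
        (fun i hi => by
          have hiE : i ∈ Finset.univ.erase l := Finset.mem_of_mem_erase hi
          have hil : i ≠ l := (Finset.mem_erase.mp hiE).1
          rw [abs_mul, hyabs i, mul_one, abs_of_nonneg (hlam' i hil)]; exact hΛ' i hiE)
        j (Finset.notMem_erase j _)
      have h2 : (lam' j * y j) * (inner ℝ v' (x j):ℝ)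
          = (lam' j * y j) * (∑ i ∈ (Finset.univ.erase l).erase j,
              (lam' i * y i) * (inner ℝ (x i) (x j):ℝ))
            + (lam' j)^2 * ‖x j‖^2 := by
        rw [hsplit]
        linear_combination ((lam' j)^2 * ‖x j‖ ^ 2) * hy1 j
      rw [h2]
      have h3 : (lam' j * y j) * (∑ i ∈ (Finset.univ.erase l).erase j,
            (lam' i * y i) * (inner ℝ (x i) (x j):ℝ)) ≤ 2.03 * (2.03 * ((m:ℝ)*φ)) := by
        calc _ ≤ |(lam' j * y j) * (∑ i ∈ (Finset.univ.erase l).erase j,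
              (lam' i * y i) * (inner ℝ (x i) (x j):ℝ))| := le_abs_self _
          _ = lam' j * |∑ i ∈ (Finset.univ.erase l).erase j,
              (lam' i * y i) * (inner ℝ (x i) (x j):ℝ)| := by
              rw [abs_mul, abs_mul, hyabs j, mul_one, abs_of_nonneg (hlam' j hjl)]
          _ ≤ 2.03 * (2.03 * ((m:ℝ)*φ)) :=
              mul_le_mul (hΛ' j hj) htail (abs_nonneg _) (by norm_num)
      have h5 : (lam' j)^2 * ‖x j‖^2 ≤ 2.03^2 * 1.1 :=
        aux_sq_prod (lam' j) _ (hlam' j hjl) (hΛ' j hj) (sq_nonneg _) (hxsq j).2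
      linarith [hmφ']
    calc (∑ j ∈ Finset.univ.erase l, (lam' j * y j) * (inner ℝ v' (x j):ℝ))
        ≤ ∑ _j ∈ Finset.univ.erase l, (4.64:ℝ) := Finset.sum_le_sum hterm
      _ = 4.64 * ((m:ℝ) - 1) := by rw [Finset.sum_const, nsmul_eq_mul, hcardE]; ring
      _ ≤ 4.64 * (m:ℝ) := by linarith
  -- upper bound for ‖w'‖
  have hW'ub : ‖w'‖^2 ≤ 8 * (m:ℝ) := by
    have h1 : ‖w'‖ ≤ ‖v'‖ + 1/2 := by
      calc ‖w'‖ = ‖(w' - v') + v'‖ := by rw [sub_add_cancel]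
        _ ≤ ‖w' - v'‖ + ‖v'‖ := norm_add_le _ _
        _ ≤ ‖v'‖ + 1/2 := by linarith [hw']
    have h3 : ‖w'‖^2 ≤ (‖v'‖ + 1/2)^2 := aux_sq_mono _ _ (norm_nonneg _) h1
    have h4 : (‖v'‖ + 1/2)^2 ≤ 8*(m:ℝ) := aux_wub ‖v'‖ (m:ℝ) (norm_nonneg _) hm2 hv'_sq
    linarith
  -- positivity of norms
  have hW0 : (0:ℝ) < ‖w‖ := by
    have h2 : (1:ℝ) ≤ ‖w‖ * ‖x l‖ := by
      calc (1:ℝ) ≤ y l * (inner ℝ w (x l):ℝ) := hmarg l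
        _ ≤ |y l * (inner ℝ w (x l):ℝ)| := le_abs_self _
        _ = |(inner ℝ w (x l):ℝ)| := by rw [abs_mul, hyabs l, one_mul]
        _ ≤ ‖w‖ * ‖x l‖ := abs_real_inner_le_norm _ _
    have := aux_pos1 ‖w‖ ‖x l‖ h2 (hxu l) (norm_nonneg _) (norm_nonneg _)
    linarith
  have hW'0 : (0:ℝ) < ‖w'‖ := by
    have h2 : (m:ℝ) - 1 ≤ ‖w'‖ * ‖u‖ := le_trans hU'lb (real_inner_le_norm _ _)
    exact aux_pos2 ‖w'‖ ‖u‖ ((m:ℝ)-1) h2 (by linarith) (norm_nonneg _) (norm_nonneg _)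
  -- scalar bound for ‖u‖
  have hu_le : ‖u‖ ≤ 1.0607 * ((m:ℝ) - 1) := by
    refine aux_le_of_sq _ _ (norm_nonneg _) (by linarith) ?_
    exact aux_usq (m:ℝ) _ hm2 hu_sq
  -- the separating vector z
  set z : EuclideanSpace ℝ (Fin d) := ‖w'‖ • w - ‖w‖ • w' with hz
  have hz_sq : ‖z‖^2 = 2*‖w‖*‖w'‖*(‖w‖*‖w'‖ - (inner ℝ w w' : ℝ)) := by
    rw [hz, norm_sub_sq_real, norm_smul, norm_smul, real_inner_smul_left,
      real_inner_smul_right]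
    simp only [Real.norm_eq_abs, abs_of_nonneg (norm_nonneg w), abs_of_nonneg (norm_nonneg w')]
    ring
  have hz_a : (inner ℝ z (x l) : ℝ)
      = ‖w'‖ * (inner ℝ w (x l):ℝ) - ‖w‖ * (inner ℝ w' (x l):ℝ) := by
    rw [hz, inner_sub_left, real_inner_smul_left, real_inner_smul_left]
  have hz_u : (inner ℝ z u : ℝ) = ‖w'‖ * (inner ℝ w u:ℝ) - ‖w‖ * (inner ℝ w' u:ℝ) := by
    rw [hz, inner_sub_left, real_inner_smul_left, real_inner_smul_left]
  clear_value z
  -- determinant lower bound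
  have hA1 : (1:ℝ) ≤ y l * (inner ℝ w (x l):ℝ) := hmarg l
  have hAμ : y l * (inner ℝ w (x l):ℝ) ≤ 1.43 + 1.16*ε₁ := hμ l
  have hA201 : y l * (inner ℝ w (x l):ℝ) ≤ 2.01 := by linarith
  have hU201 : (inner ℝ w u : ℝ) ≤ 2.01*((m:ℝ)-1) := by
    have h := mul_le_mul_of_nonneg_left (show 1.43+1.16*ε₁ ≤ 2.01 by linarith)
      (show (0:ℝ) ≤ (m:ℝ)-1 by linarith)
    linarith [hUub]
  have hN : 0.17 * ((m:ℝ)-1) ≤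
      (y l * (inner ℝ w (x l):ℝ)) * (inner ℝ w' u:ℝ)
      - (y l * (inner ℝ w' (x l):ℝ)) * (inner ℝ w u:ℝ) :=
    aux_det _ _ _ _ (m:ℝ) ε₁ ε' hm2 hA1 hU'lb hUlb hUub hρ hε₁.le hε'p.le hσ
  -- identity and upper bound leading to ‖z‖ ≥ 0.04 ‖w‖
  have hid : ‖w‖ * ((y l * (inner ℝ w (x l):ℝ)) * (inner ℝ w' u:ℝ)
        - (y l * (inner ℝ w' (x l):ℝ)) * (inner ℝ w u:ℝ))
      = (inner ℝ w u:ℝ) * (y l * (inner ℝ z (x l):ℝ))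
        - (y l * (inner ℝ w (x l):ℝ)) * (inner ℝ z u:ℝ) := by
    rw [hz_a, hz_u]; ring
  have hb1 : y l * (inner ℝ z (x l):ℝ) ≤ ‖z‖ * 1.049 := by
    calc y l * (inner ℝ z (x l):ℝ) ≤ |y l * (inner ℝ z (x l):ℝ)| := le_abs_self _
      _ = |(inner ℝ z (x l):ℝ)| := by rw [abs_mul, hyabs l, one_mul]
      _ ≤ ‖z‖ * ‖x l‖ := abs_real_inner_le_norm _ _
      _ ≤ ‖z‖ * 1.049 := mul_le_mul_of_nonneg_left (hxu l) (norm_nonneg z)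
  have hb2 : -(inner ℝ z u:ℝ) ≤ ‖z‖ * (1.0607 * ((m:ℝ)-1)) := by
    calc -(inner ℝ z u:ℝ) ≤ |(inner ℝ z u:ℝ)| := neg_le_abs _
      _ ≤ ‖z‖ * ‖u‖ := abs_real_inner_le_norm _ _
      _ ≤ ‖z‖ * (1.0607 * ((m:ℝ)-1)) := mul_le_mul_of_nonneg_left hu_le (norm_nonneg z)
  have hzlb : 0.04 * ‖w‖ ≤ ‖z‖ := by
    have hU0 : (0:ℝ) ≤ (inner ℝ w u : ℝ) := by linarith
    have hA0 : (0:ℝ) ≤ y l * (inner ℝ w (x l):ℝ) := by linarith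
    have hWN : ‖w‖ * ((y l * (inner ℝ w (x l):ℝ)) * (inner ℝ w' u:ℝ)
          - (y l * (inner ℝ w' (x l):ℝ)) * (inner ℝ w u:ℝ))
        ≤ ‖z‖ * (4.241 * ((m:ℝ)-1)) := by
      rw [hid]
      exact aux_wnub _ _ _ _ _ _ hU0 hA0 hU201 hA201 hb1 hb2 (norm_nonneg z) hm2
    exact aux_zlb ‖w‖ _ ‖z‖ (m:ℝ) hN hWN hW0 hm2 (norm_nonneg z)
  -- conclude
  have hzsq_lb : 0.0016 * ‖w‖^2 ≤ ‖z‖^2 := by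
    have h := aux_sq_mono (0.04*‖w‖) ‖z‖ (by positivity) hzlb
    calc 0.0016*‖w‖^2 = (0.04*‖w‖)^2 := by ring
      _ ≤ ‖z‖^2 := h
  have h8 : (1/(m:ℝ)) * ‖w'‖^2 ≤ 8 := by
    have h := mul_le_mul_of_nonneg_left hW'ub (show (0:ℝ) ≤ 1/(m:ℝ) by positivity)
    calc (1/(m:ℝ)) * ‖w'‖^2 ≤ (1/(m:ℝ)) * (8*(m:ℝ)) := h
      _ = 8 := by field_simp
  exact aux_final ‖w‖ ‖w'‖ _ (1/(m:ℝ)) (εd+ε₁+ε') (‖z‖^2) hz_sq hzsq_lb h8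
    (by positivity) (by linarith) hW0 hW'0
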